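/- Let m ≥ 2 and write σ₀ = 1₂ and σ₃ = σ₁σ₂. Every element of E(m), i.e. every matrix of the form ±σ_{i₁} ⊗ ⋯ ⊗ σ_{iₘ} with i_k ∈ {0,1,2,3}, is conjugate by an orthogonal matrix lying in the normalizer of E(m) in O(2^m, ℝ) to one of the four matrices: the identity I, −I, σ₂ ⊗ 1₂ ⊗ ⋯ ⊗ 1₂, or σ₃ ⊗ 1₂ ⊗ ⋯ ⊗ 1₂. -/

import Mathlib

open Matrix

/-- The type of `2^m × 2^m` real matrices, with rows and columns indexed by `𝔽₂^m`. -/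
abbrev EMat (m : ℕ) := Matrix (Fin m → Fin 2) (Fin m → Fin 2) ℝ

/-- `pauliR 0 = 1₂`, `pauliR 1 = σ₁`, `pauliR 2 = σ₂`, `pauliR 3 = σ₃ = σ₁ σ₂`. -/
noncomputable def pauliR : Fin 4 → Matrix (Fin 2) (Fin 2) ℝ :=
  ![1, !![0, 1; 1, 0], !![1, 0; 0, -1], !![0, 1; 1, 0] * !![1, 0; 0, -1]]

/-- The Kronecker (tensor) product of `m` matrices of size `2 × 2`. -/
noncomputable def kprod (m : ℕ) (f : Fin m → Matrix (Fin 2) (Fin 2) ℝ) : EMat m :=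
  Matrix.of fun i j => ∏ a, f a (i a) (j a)

/-- The extraspecial group `E(m) = 2_+^{2m+1}`, realized as the set of matrices
`± σ_{i₁} ⊗ ⋯ ⊗ σ_{iₘ}` with each factor in `{1₂, σ₁, σ₂, σ₁σ₂}`. -/
noncomputable def Esp (m : ℕ) : Finset (EMat m) :=
  @Finset.image _ _ (Classical.decEq _)
    (fun p : Bool × (Fin m → Fin 4) =>
      (if p.1 then (-1 : EMat m) else 1) * kprod m fun b => pauliR (p.2 b))
    Finset.univ

namespace EspAux

variable {m : ℕ}

lemma f2_add_self (a : Fin 2) : a + a = 0 := by fin_cases a <;> decide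

lemma vadd_self (v : Fin m → Fin 2) : v + v = 0 := funext fun a => f2_add_self (v a)

/-! ### dot products over Fin 2 -/

def dot2 (z x : Fin m → Fin 2) : Fin 2 := ∑ a, z a * x a

lemma dot2_comm (z x : Fin m → Fin 2) : dot2 z x = dot2 x z :=
  Finset.sum_congr rfl fun a _ => mul_comm _ _

lemma dot2_add_right (z x y : Fin m → Fin 2) : dot2 z (x + y) = dot2 z x + dot2 z y := by
  simp [dot2, mul_add, Finset.sum_add_distrib]

lemma dot2_add_left (z w x : Fin m → Fin 2) : dot2 (z + w) x = dot2 z x + dot2 w x := by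
  simp [dot2, add_mul, Finset.sum_add_distrib]

lemma dot2_smul_right (z : Fin m → Fin 2) (c : Fin 2) (x : Fin m → Fin 2) :
    dot2 z (c • x) = c * dot2 z x := by
  simp [dot2, Finset.mul_sum, mul_left_comm]

lemma dot2_smul_left (z : Fin m → Fin 2) (c : Fin 2) (x : Fin m → Fin 2) :
    dot2 (c • z) x = c * dot2 z x := by
  simp [dot2, Finset.mul_sum, mul_assoc]

lemma dot2_zero_right (z : Fin m → Fin 2) : dot2 z 0 = 0 := by simp [dot2]

lemma dot2_zero_left (x : Fin m → Fin 2) : dot2 0 x = 0 := by simp [dot2]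

def δv (a : Fin m) : Fin m → Fin 2 := fun b => if b = a then 1 else 0

lemma dot2_delta_left (a : Fin m) (v : Fin m → Fin 2) : dot2 (δv a) v = v a := by
  simp [dot2, δv, ite_mul]

lemma dot2_delta_right (v : Fin m → Fin 2) (a : Fin m) : dot2 v (δv a) = v a := by
  rw [dot2_comm, dot2_delta_left]

/-! ### the sign character -/

noncomputable def chi (z x : Fin m → Fin 2) : ℝ := (-1) ^ ((dot2 z x : Fin 2) : ℕ)

lemma neg_one_pow_mod (n : ℕ) : ((-1 : ℝ)) ^ (n % 2) = (-1) ^ n := by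
  conv_rhs => rw [← Nat.div_add_mod n 2]
  rw [pow_add, pow_mul]
  norm_num

open Fin.NatCast Fin.CommRing in
lemma chi_prod (z x : Fin m → Fin 2) :
    chi z x = ∏ a, (-1 : ℝ) ^ ((z a * x a : Fin 2) : ℕ) := by
  rw [Finset.prod_pow_eq_pow_sum]
  have h1 : dot2 z x = ((∑ a, ((z a * x a : Fin 2) : ℕ) : ℕ) : Fin 2) := by
    rw [dot2, Nat.cast_sum]
    exact Finset.sum_congr rfl fun a _ => (Fin.cast_val_eq_self _).symm
  rw [chi, h1, Fin.val_natCast, neg_one_pow_mod]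

lemma chi_cases (z x : Fin m → Fin 2) : chi z x = 1 ∨ chi z x = -1 := by
  unfold chi
  generalize dot2 z x = d
  fin_cases d <;> norm_num

lemma chi_mul_self (z x : Fin m → Fin 2) : chi z x * chi z x = 1 := by
  rcases chi_cases z x with h | h <;> rw [h] <;> norm_num

lemma chi_congr {z x z' x' : Fin m → Fin 2} (h : dot2 z x = dot2 z' x') :
    chi z x = chi z' x' := by unfold chi; rw [h]

lemma chi_add_right (z x y : Fin m → Fin 2) : chi z (x + y) = chi z x * chi z y := by
  unfold chi
  rw [dot2_add_right]
  generalize dot2 z x = d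
  generalize dot2 z y = e
  rw [Fin.val_add]
  fin_cases d <;> fin_cases e <;> norm_num

lemma chi_add_left (z w x : Fin m → Fin 2) : chi (z + w) x = chi z x * chi w x := by
  unfold chi
  rw [dot2_add_left]
  generalize dot2 z x = d
  generalize dot2 w x = e
  rw [Fin.val_add]
  fin_cases d <;> fin_cases e <;> norm_num

lemma chi_zero_left (x : Fin m → Fin 2) : chi 0 x = 1 := by
  unfold chi; rw [dot2_zero_left]; norm_num

lemma chi_zero_right (z : Fin m → Fin 2) : chi z 0 = 1 := by
  unfold chi; rw [dot2_zero_right]; norm_num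

/-! ### kprod algebra -/

lemma kprod_mul (f g : Fin m → Matrix (Fin 2) (Fin 2) ℝ) :
    kprod m f * kprod m g = kprod m fun a => f a * g a := by
  ext i k
  simp only [kprod, Matrix.mul_apply, Matrix.of_apply]
  rw [Fintype.prod_sum fun a p => f a (i a) p * g a p (k a)]
  exact Finset.sum_congr rfl fun x _ => (Finset.prod_mul_distrib).symm

lemma kprod_transpose (f : Fin m → Matrix (Fin 2) (Fin 2) ℝ) :
    (kprod m f)ᵀ = kprod m fun a => (f a)ᵀ := by
  ext i j
  simp [kprod, Matrix.transpose_apply]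

lemma kprod_smul (c : Fin m → ℝ) (f : Fin m → Matrix (Fin 2) (Fin 2) ℝ) :
    kprod m (fun a => c a • f a) = (∏ a, c a) • kprod m f := by
  ext i j
  simp [kprod, Finset.prod_mul_distrib]

lemma kprod_one : kprod m (fun _ => (1 : Matrix (Fin 2) (Fin 2) ℝ)) = 1 := by
  ext i j
  simp only [kprod, Matrix.of_apply, Matrix.one_apply]
  by_cases h : i = j
  · subst h; simp
  · rw [if_neg h]
    obtain ⟨a, ha⟩ := Function.ne_iff.mp h
    exact Finset.prod_eq_zero (Finset.mem_univ a) (by rw [if_neg ha])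


/-! ### 2x2 building blocks -/

noncomputable def m2 (x z : Fin 2) : Matrix (Fin 2) (Fin 2) ℝ :=
  Matrix.of fun i j => if i = j + x then (-1 : ℝ) ^ ((z * j : Fin 2) : ℕ) else 0

lemma m2_zero : m2 0 0 = 1 := by
  ext i j
  fin_cases i <;> fin_cases j <;> simp [m2, Matrix.one_apply] <;> decide

lemma m2_mul (x z x' z' : Fin 2) :
    m2 x z * m2 x' z' = ((-1 : ℝ) ^ ((z * x' : Fin 2) : ℕ)) • m2 (x + x') (z + z') := by
  fin_cases x <;> fin_cases z <;> fin_cases x' <;> fin_cases z' <;>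
    (ext i j; fin_cases i <;> fin_cases j <;>
      simp [m2, Matrix.mul_apply, Fin.sum_univ_two] <;> norm_num <;> decide)

lemma m2_transpose (x z : Fin 2) :
    (m2 x z)ᵀ = ((-1 : ℝ) ^ ((z * x : Fin 2) : ℕ)) • m2 x z := by
  fin_cases x <;> fin_cases z <;>
    (ext i j; fin_cases i <;> fin_cases j <;>
      simp [m2, Matrix.transpose_apply] <;> norm_num <;> decide)

noncomputable def Hm : Matrix (Fin 2) (Fin 2) ℝ :=
  Matrix.of fun i j => (Real.sqrt 2)⁻¹ * (if i = 1 ∧ j = 1 then -1 else 1)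

lemma Hm_transpose : Hmᵀ = Hm := by
  ext i j
  fin_cases i <;> fin_cases j <;> simp [Hm, Matrix.transpose_apply]

lemma Hm_mul_Hm : Hm * Hm = 1 := by
  have h2 : Real.sqrt 2 * Real.sqrt 2 = 2 := Real.mul_self_sqrt (by norm_num)
  have h0 : Real.sqrt 2 ≠ 0 := by positivity
  ext i j
  fin_cases i <;> fin_cases j <;>
    simp [Hm, Matrix.mul_apply, Fin.sum_univ_two, Matrix.one_apply] <;>
    field_simp <;> rw [sq, h2] <;> norm_num

noncomputable def s2 (x z : Fin 2) : ℝ := if x = 1 ∧ z = 1 then -1 else 1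

lemma s2_cases (x z : Fin 2) : s2 x z = 1 ∨ s2 x z = -1 := by
  unfold s2; split <;> simp

lemma Hm_conj (x z : Fin 2) : Hm * m2 x z * Hm = s2 x z • m2 z x := by
  have h2 : Real.sqrt 2 * Real.sqrt 2 = 2 := Real.mul_self_sqrt (by norm_num)
  have h0 : Real.sqrt 2 ≠ 0 := by positivity
  fin_cases x <;> fin_cases z <;>
    (ext i j
     fin_cases i <;> fin_cases j <;>
       simp [Hm, m2, s2, Matrix.mul_apply, Fin.sum_univ_two] <;>
       (try field_simp) <;> (try ring_nf) <;> (try simp [h2]) <;> (try nlinarith [h2]))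

/-! ### the matrices M x z -/

noncomputable def Mm (x z : Fin m → Fin 2) : EMat m := kprod m fun a => m2 (x a) (z a)

lemma Mm_mul (x z x' z' : Fin m → Fin 2) :
    Mm x z * Mm x' z' = chi z x' • Mm (x + x') (z + z') := by
  rw [Mm, Mm, kprod_mul]
  have h : (fun a => m2 (x a) (z a) * m2 (x' a) (z' a)) =
      fun a => ((-1 : ℝ) ^ ((z a * x' a : Fin 2) : ℕ)) • m2 ((x + x') a) ((z + z') a) := by
    funext a
    exact m2_mul (x a) (z a) (x' a) (z' a)
  rw [h, kprod_smul, ← chi_prod]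
  rfl

lemma Mm_transpose (x z : Fin m → Fin 2) : (Mm x z)ᵀ = chi z x • Mm x z := by
  rw [Mm, kprod_transpose]
  have h : (fun a => (m2 (x a) (z a))ᵀ) =
      fun a => ((-1 : ℝ) ^ ((z a * x a : Fin 2) : ℕ)) • m2 (x a) (z a) := by
    funext a
    exact m2_transpose (x a) (z a)
  rw [h, kprod_smul, ← chi_prod]

lemma Mm_zero : (Mm 0 0 : EMat m) = 1 := by
  rw [Mm]
  have h : (fun a : Fin m => m2 ((0 : Fin m → Fin 2) a) ((0 : Fin m → Fin 2) a)) =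
      fun _ => (1 : Matrix (Fin 2) (Fin 2) ℝ) := by
    funext a
    exact m2_zero
  rw [h, kprod_one]

lemma Mm_mul_transpose (x z : Fin m → Fin 2) : Mm x z * (Mm x z)ᵀ = 1 := by
  rw [Mm_transpose, Matrix.mul_smul, Mm_mul, vadd_self, vadd_self, Mm_zero, smul_smul,
    chi_mul_self, one_smul]

lemma Mm_transpose_mul (x z : Fin m → Fin 2) : (Mm x z)ᵀ * Mm x z = 1 := by
  rw [Mm_transpose, Matrix.smul_mul, Mm_mul, vadd_self, vadd_self, Mm_zero, smul_smul,
    chi_mul_self, one_smul]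


lemma Mm_apply (x z i j : Fin m → Fin 2) :
    Mm x z i j = if i = j + x then chi z j else 0 := by
  by_cases h : i = j + x
  · rw [if_pos h, Mm, kprod, Matrix.of_apply, chi_prod]
    refine Finset.prod_congr rfl fun a _ => ?_
    rw [m2, Matrix.of_apply, if_pos]
    rw [h]; rfl
  · rw [if_neg h, Mm, kprod, Matrix.of_apply]
    have h2 : ∃ a, i a ≠ j a + x a := by
      by_contra hc
      push_neg at hc
      exact h (funext fun a => hc a)
    obtain ⟨a, ha⟩ := h2
    exact Finset.prod_eq_zero (Finset.mem_univ a) (by rw [m2, Matrix.of_apply, if_neg ha])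

/-! ### membership in Esp -/

def xb : Fin 4 → Fin 2 := ![0, 1, 0, 1]
def zb : Fin 4 → Fin 2 := ![0, 0, 1, 1]
def p4 (x z : Fin 2) : Fin 4 := ⟨x.val + 2 * z.val, by omega⟩

lemma p4_xb (x z : Fin 2) : xb (p4 x z) = x ∧ zb (p4 x z) = z := by
  fin_cases x <;> fin_cases z <;> exact ⟨rfl, rfl⟩

lemma pauliR_eq (i : Fin 4) : pauliR i = m2 (xb i) (zb i) := by
  fin_cases i <;>
    (ext a b; fin_cases a <;> fin_cases b <;>
      simp [pauliR, m2, xb, zb, Matrix.mul_apply, Fin.sum_univ_two] <;> decide)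

lemma mem_Esp_iff (g : EMat m) :
    g ∈ Esp m ↔ ∃ (c : ℝ) (x z : Fin m → Fin 2), (c = 1 ∨ c = -1) ∧ g = c • Mm x z := by
  constructor
  · intro hg
    rw [Esp, @Finset.mem_image _ _ (Classical.decEq _)] at hg
    obtain ⟨⟨b, f⟩, -, rfl⟩ := hg
    refine ⟨if b then -1 else 1, fun a => xb (f a), fun a => zb (f a), ?_, ?_⟩
    · cases b <;> simp
    · have hk : (kprod m fun a => pauliR (f a)) = Mm (fun a => xb (f a)) (fun a => zb (f a)) :=
        congrArg (kprod m) (funext fun a => pauliR_eq (f a))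
      cases b <;> simp [hk, neg_one_smul]
  · rintro ⟨c, x, z, hc, rfl⟩
    rw [Esp, @Finset.mem_image _ _ (Classical.decEq _)]
    refine ⟨⟨if c = 1 then false else true, fun a => p4 (x a) (z a)⟩, Finset.mem_univ _, ?_⟩
    have hk : (kprod m fun a => pauliR (p4 (x a) (z a))) = Mm x z :=
      congrArg (kprod m) (funext fun a => by
        rw [pauliR_eq, (p4_xb (x a) (z a)).1, (p4_xb (x a) (z a)).2])
    rcases hc with rfl | rfl
    · simp [hk]
    · norm_num [hk, neg_one_smul]

lemma smul_Mm_mem (c : ℝ) (hc : c = 1 ∨ c = -1) (x z : Fin m → Fin 2) :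
    c • Mm x z ∈ Esp m := (mem_Esp_iff _).2 ⟨c, x, z, hc, rfl⟩

/-! ### the Clifford predicate -/

def Cl (U : EMat m) : Prop :=
  U * Uᵀ = 1 ∧ Uᵀ * U = 1 ∧ (∀ h ∈ Esp m, U * h * Uᵀ ∈ Esp m) ∧
    (∀ h ∈ Esp m, Uᵀ * h * U ∈ Esp m)

lemma Cl_one : Cl (1 : EMat m) := by
  refine ⟨by simp, by simp, fun h hh => by simpa using hh, fun h hh => by simpa using hh⟩

lemma Cl_mul {U W : EMat m} (hU : Cl U) (hW : Cl W) : Cl (U * W) := by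
  obtain ⟨hU1, hU2, hU3, hU4⟩ := hU
  obtain ⟨hW1, hW2, hW3, hW4⟩ := hW
  refine ⟨?_, ?_, ?_, ?_⟩
  · rw [Matrix.transpose_mul]
    calc U * W * (Wᵀ * Uᵀ) = U * (W * Wᵀ) * Uᵀ := by noncomm_ring
    _ = 1 := by rw [hW1, Matrix.mul_one, hU1]
  · rw [Matrix.transpose_mul]
    calc Wᵀ * Uᵀ * (U * W) = Wᵀ * (Uᵀ * U) * W := by noncomm_ring
    _ = 1 := by rw [hU2, Matrix.mul_one, hW2]
  · intro h hh
    rw [Matrix.transpose_mul]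
    have : U * W * h * (Wᵀ * Uᵀ) = U * (W * h * Wᵀ) * Uᵀ := by noncomm_ring
    rw [this]
    exact hU3 _ (hW3 h hh)
  · intro h hh
    rw [Matrix.transpose_mul]
    have : Wᵀ * Uᵀ * h * (U * W) = Wᵀ * (Uᵀ * h * U) * W := by noncomm_ring
    rw [this]
    exact hW4 _ (hU4 h hh)

lemma Cl_transpose {U : EMat m} (hU : Cl U) : Cl Uᵀ := by
  obtain ⟨hU1, hU2, hU3, hU4⟩ := hU
  exact ⟨by rw [Matrix.transpose_transpose]; exact hU2,
    by rw [Matrix.transpose_transpose]; exact hU1,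
    by intro h hh; rw [Matrix.transpose_transpose]; exact hU4 h hh,
    by intro h hh; rw [Matrix.transpose_transpose]; exact hU3 h hh⟩

lemma Cl_iff_mem {U : EMat m} (hU : Cl U) (h : EMat m) : h ∈ Esp m ↔ U * h * Uᵀ ∈ Esp m := by
  obtain ⟨hU1, hU2, hU3, hU4⟩ := hU
  constructor
  · exact hU3 h
  · intro hh
    have := hU4 _ hh
    have heq : Uᵀ * (U * h * Uᵀ) * U = h := by
      calc Uᵀ * (U * h * Uᵀ) * U = (Uᵀ * U) * h * (Uᵀ * U) := by noncomm_ring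
      _ = h := by rw [hU2, Matrix.one_mul, Matrix.mul_one]
    rwa [heq] at this

lemma Cl_of_conj {U : EMat m} (hU1 : U * Uᵀ = 1) (hU2 : Uᵀ * U = 1)
    (hc : ∀ x z : Fin m → Fin 2, ∃ (c : ℝ) (x' z' : Fin m → Fin 2),
      (c = 1 ∨ c = -1) ∧ U * Mm x z * Uᵀ = c • Mm x' z')
    (hc' : ∀ x z : Fin m → Fin 2, ∃ (c : ℝ) (x' z' : Fin m → Fin 2),
      (c = 1 ∨ c = -1) ∧ Uᵀ * Mm x z * U = c • Mm x' z') : Cl U := by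
  refine ⟨hU1, hU2, ?_, ?_⟩
  · intro h hh
    obtain ⟨d, x, z, hd, rfl⟩ := (mem_Esp_iff h).1 hh
    obtain ⟨c, x', z', hcc, hconj⟩ := hc x z
    have : U * (d • Mm x z) * Uᵀ = (d * c) • Mm x' z' := by
      rw [Matrix.mul_smul, Matrix.smul_mul, hconj, smul_smul]
    rw [this]
    refine smul_Mm_mem _ ?_ _ _
    rcases hd with rfl | rfl <;> rcases hcc with rfl | rfl <;> norm_num
  · intro h hh
    obtain ⟨d, x, z, hd, rfl⟩ := (mem_Esp_iff h).1 hh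
    obtain ⟨c, x', z', hcc, hconj⟩ := hc' x z
    have : Uᵀ * (d • Mm x z) * U = (d * c) • Mm x' z' := by
      rw [Matrix.mul_smul, Matrix.smul_mul, hconj, smul_smul]
    rw [this]
    refine smul_Mm_mem _ ?_ _ _
    rcases hd with rfl | rfl <;> rcases hcc with rfl | rfl <;> norm_num


/-! ### index-permutation generators -/

noncomputable def Uf (f : (Fin m → Fin 2) → (Fin m → Fin 2)) : EMat m :=
  Matrix.of fun i j => if i = f j then 1 else 0

section Uf

variable {f g : (Fin m → Fin 2) → (Fin m → Fin 2)}
variable (hf : Function.Involutive f) (hg : Function.Involutive g)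
variable (hfa : ∀ u v, f (u + v) = f u + f v)
variable (hfg : ∀ z j, dot2 z (f j) = dot2 (g z) j)

include hf in
lemma Uf_transpose : (Uf f)ᵀ = Uf f := by
  ext i j
  rw [Matrix.transpose_apply, Uf, Matrix.of_apply, Matrix.of_apply]
  congr 1
  refine propext ⟨fun h => by rw [h, hf], fun h => by rw [h, hf]⟩

include hf in
lemma mul_Uf (A : EMat m) : A * Uf f = Matrix.of fun i j => A i (f j) := by
  ext i j
  rw [Matrix.mul_apply, Matrix.of_apply]
  calc ∑ k, A i k * Uf f k j = ∑ k, if k = f j then A i k else 0 := by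
        refine Finset.sum_congr rfl fun k _ => ?_
        rw [Uf, Matrix.of_apply, mul_ite, mul_one, mul_zero]
  _ = A i (f j) := (Finset.sum_ite_eq' _ _ _).trans (if_pos (Finset.mem_univ _))

include hf in
lemma Uf_mul (A : EMat m) : Uf f * A = Matrix.of fun i j => A (f i) j := by
  ext i j
  rw [Matrix.mul_apply, Matrix.of_apply]
  calc ∑ k, Uf f i k * A k j = ∑ k, if k = f i then A k j else 0 := by
        refine Finset.sum_congr rfl fun k _ => ?_
        rw [Uf, Matrix.of_apply, ite_mul, one_mul, zero_mul]
        congr 1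
        refine propext ⟨fun h => by rw [h, hf], fun h => by rw [h, hf]⟩
  _ = A (f i) j := (Finset.sum_ite_eq' _ _ _).trans (if_pos (Finset.mem_univ _))

include hf in
lemma Uf_orth : Uf f * (Uf f)ᵀ = 1 := by
  rw [Uf_transpose hf, mul_Uf hf]
  ext i j
  rw [Matrix.of_apply, Uf, Matrix.of_apply, show f (f j) = j from hf j, Matrix.one_apply]

include hf hfa hfg in
lemma Uf_conj (x z : Fin m → Fin 2) : Uf f * Mm x z * (Uf f)ᵀ = Mm (f x) (g z) := by
  rw [Uf_transpose hf, Uf_mul hf, mul_Uf hf]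
  ext i j
  rw [Matrix.of_apply, Matrix.of_apply, Mm_apply, Mm_apply]
  have hcond : f i = f j + x ↔ i = j + f x := by
    constructor
    · intro h
      have h2 : f (f i) = f (f j + x) := by rw [h]
      rwa [hf i, hfa, hf j] at h2
    · intro h
      rw [h, hfa, hf x]
  have hchi : chi z (f j) = chi (g z) j := chi_congr (hfg z j)
  rw [hchi]
  exact if_congr hcond rfl rfl

include hf hg hfa hfg in
lemma Cl_Uf : Cl (Uf f) := by
  have hsym : (Uf f)ᵀ = Uf f := Uf_transpose hf
  have horth : Uf f * (Uf f)ᵀ = 1 := Uf_orth hf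
  have horth2 : (Uf f)ᵀ * Uf f = 1 := by rw [hsym]; rw [hsym] at horth; exact horth
  refine Cl_of_conj horth horth2 ?_ ?_
  · intro x z
    exact ⟨1, f x, g z, Or.inl rfl, by rw [Uf_conj hf hfa hfg, one_smul]⟩
  · intro x z
    have hcj := Uf_conj hf hfa hfg x z
    rw [hsym] at hcj ⊢
    exact ⟨1, f x, g z, Or.inl rfl, by rw [hcj, one_smul]⟩

end Uf

/-! ### transvection generators -/

def Tv (u c : Fin m → Fin 2) : (Fin m → Fin 2) → (Fin m → Fin 2) :=
  fun v => v + dot2 c v • u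

open Fin.CommRing in
lemma Tv_invol {u c : Fin m → Fin 2} (h : dot2 c u = 0) : Function.Involutive (Tv u c) := by
  intro v
  rw [Tv, Tv, dot2_add_right, dot2_smul_right, h, mul_zero, add_zero, add_assoc,
    ← add_smul, f2_add_self, zero_smul, add_zero]

open Fin.CommRing in
lemma Tv_add (u c : Fin m → Fin 2) (v w : Fin m → Fin 2) :
    Tv u c (v + w) = Tv u c v + Tv u c w := by
  rw [Tv, Tv, Tv, dot2_add_right, add_smul]
  abel

open Fin.CommRing in
lemma Tv_dot (u c : Fin m → Fin 2) (z j : Fin m → Fin 2) :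
    dot2 z (Tv u c j) = dot2 (Tv c u z) j := by
  rw [Tv, Tv, dot2_add_right, dot2_smul_right, dot2_add_left, dot2_smul_left]
  rw [dot2_comm z u, dot2_comm u z]
  ring

noncomputable def TU (u c : Fin m → Fin 2) : EMat m := Uf (Tv u c)

lemma TU_conj {u c : Fin m → Fin 2} (h : dot2 c u = 0) (x z : Fin m → Fin 2) :
    TU u c * Mm x z * (TU u c)ᵀ = Mm (Tv u c x) (Tv c u z) :=
  Uf_conj (Tv_invol h) (Tv_add u c) (Tv_dot u c) x z

lemma Cl_TU {u c : Fin m → Fin 2} (h : dot2 c u = 0) : Cl (TU u c) := by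
  have h' : dot2 u c = 0 := by rw [dot2_comm]; exact h
  exact Cl_Uf (Tv_invol h) (Tv_invol h') (Tv_add u c) (Tv_dot u c)


/-! ### Hadamard generators -/

noncomputable def Had (a : Fin m) : EMat m := kprod m fun b => if b = a then Hm else 1

lemma Had_transpose (a : Fin m) : (Had a)ᵀ = Had a := by
  rw [Had, kprod_transpose]
  refine congrArg (kprod m) (funext fun b => ?_)
  by_cases hb : b = a <;> simp [hb, Hm_transpose]

lemma Had_mul_self (a : Fin m) : Had a * Had a = 1 := by
  rw [Had, kprod_mul]
  have h : (fun b => (if b = a then Hm else 1) * (if b = a then Hm else 1)) =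
      fun _ : Fin m => (1 : Matrix (Fin 2) (Fin 2) ℝ) := by
    funext b
    by_cases hb : b = a <;> simp [hb, Hm_mul_Hm]
  rw [h, kprod_one]

lemma Had_conj (a : Fin m) (x z : Fin m → Fin 2) :
    Had a * Mm x z * (Had a)ᵀ = s2 (x a) (z a) •
      Mm (Function.update x a (z a)) (Function.update z a (x a)) := by
  rw [Had_transpose, Had, Mm, kprod_mul, kprod_mul]
  have h : (fun b => (if b = a then Hm else 1) * m2 (x b) (z b) * (if b = a then Hm else 1)) =
      fun b => (if b = a then s2 (x a) (z a) else 1) •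
        m2 (Function.update x a (z a) b) (Function.update z a (x a) b) := by
    funext b
    by_cases hb : b = a
    · subst hb
      rw [if_pos rfl, if_pos rfl, Function.update_self, Function.update_self]
      exact Hm_conj (x b) (z b)
    · rw [if_neg hb, if_neg hb, one_mul, mul_one, Function.update_of_ne hb,
        Function.update_of_ne hb, one_smul]
  rw [h, kprod_smul]
  have hprod : (∏ b, if b = a then s2 (x a) (z a) else 1) = s2 (x a) (z a) :=
    (Finset.prod_ite_eq' _ _ _).trans (if_pos (Finset.mem_univ _))
  rw [hprod]
  rfl

lemma Cl_Had (a : Fin m) : Cl (Had a) := by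
  have horth : Had a * (Had a)ᵀ = 1 := by rw [Had_transpose]; exact Had_mul_self a
  have horth2 : (Had a)ᵀ * Had a = 1 := by rw [Had_transpose]; exact Had_mul_self a
  refine Cl_of_conj horth horth2 ?_ ?_
  · intro x z
    exact ⟨s2 (x a) (z a), _, _, s2_cases _ _, Had_conj a x z⟩
  · intro x z
    have hcj := Had_conj a x z
    rw [Had_transpose] at hcj ⊢
    exact ⟨s2 (x a) (z a), _, _, s2_cases _ _, hcj⟩

/-! ### conjugation by elements of Esp itself -/

lemma Mm_conj (x' z' x z : Fin m → Fin 2) :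
    Mm x' z' * Mm x z * (Mm x' z')ᵀ = (chi z' x * chi z x') • Mm x z := by
  rw [Mm_mul, Mm_transpose, Matrix.smul_mul, Matrix.mul_smul, Mm_mul]
  have hx : x' + x + x' = x := by
    rw [add_comm x' x, add_assoc, vadd_self, add_zero]
  have hz : z' + z + z' = z := by
    rw [add_comm z' z, add_assoc, vadd_self, add_zero]
  rw [hx, hz, chi_add_left, smul_smul, smul_smul]
  congr 1
  linear_combination (chi z' x * chi z x') * chi_mul_self z' x'

lemma Cl_Mm (x' z' : Fin m → Fin 2) : Cl (Mm x' z') := by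
  refine Cl_of_conj (Mm_mul_transpose x' z') (Mm_transpose_mul x' z') ?_ ?_
  · intro x z
    exact ⟨chi z' x * chi z x', x, z, by
      rcases chi_cases z' x with h1 | h1 <;> rcases chi_cases z x' with h2 | h2 <;>
        rw [h1, h2] <;> norm_num, Mm_conj x' z' x z⟩
  · intro x z
    have hcj : (Mm x' z')ᵀ * Mm x z * Mm x' z' = (chi z' x * chi z x') • Mm x z := by
      have h1 : (Mm x' z')ᵀ * Mm x z * Mm x' z' =
          chi z' x' • (Mm x' z' * Mm x z * Mm x' z') := by
        rw [Mm_transpose, Matrix.smul_mul, Matrix.smul_mul]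
      have h2 : Mm x' z' * Mm x z * (Mm x' z')ᵀ =
          chi z' x' • (Mm x' z' * Mm x z * Mm x' z') := by
        rw [Mm_transpose, Matrix.mul_smul]
      rw [h1, ← h2, Mm_conj]
    exact ⟨chi z' x * chi z x', x, z, by
      rcases chi_cases z' x with h1 | h1 <;> rcases chi_cases z x' with h2 | h2 <;>
        rw [h1, h2] <;> norm_num, hcj⟩

/-! ### composition of conjugation steps -/

lemma step {U W A B C : EMat m} {c d : ℝ} (hU : Cl U) (hW : Cl W)
    (h1 : U * A * Uᵀ = c • B) (h2 : W * B * Wᵀ = d • C) :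
    Cl (W * U) ∧ (W * U) * A * (W * U)ᵀ = (d * c) • C := by
  refine ⟨Cl_mul hW hU, ?_⟩
  rw [Matrix.transpose_mul]
  calc W * U * A * (Uᵀ * Wᵀ) = W * (U * A * Uᵀ) * Wᵀ := by noncomm_ring
  _ = W * (c • B) * Wᵀ := by rw [h1]
  _ = c • (W * B * Wᵀ) := by rw [Matrix.mul_smul, Matrix.smul_mul]
  _ = (d * c) • C := by rw [h2, smul_smul, mul_comm]


/-! ### small Fin 2 helpers -/

lemma f2_ne_zero {b : Fin 2} (h : b ≠ 0) : b = 1 := by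
  fin_cases b
  · exact absurd rfl h
  · rfl

lemma f2_ne_one {b : Fin 2} (h : b ≠ 1) : b = 0 := by
  fin_cases b
  · rfl
  · exact absurd rfl h

lemma f2_one_add_one : (1 : Fin 2) + 1 = 0 := rfl

lemma δv_self (a : Fin m) : δv a a = 1 := if_pos rfl

lemma δv_ne {a b : Fin m} (h : b ≠ a) : δv a b = 0 := if_neg h

lemma chi_delta (a : Fin m) : chi (δv a) (δv a) = -1 := by
  rw [chi, dot2_delta_left, δv_self]
  norm_num

/-! ### the reduction algorithm -/

lemma reduce_x (hm : 0 < m) (x z : Fin m → Fin 2) (hx : x ≠ 0) :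
    ∃ (U : EMat m) (c : ℝ), Cl U ∧ (c = 1 ∨ c = -1) ∧
      (U * Mm x z * Uᵀ = c • Mm 0 (δv ⟨0, hm⟩) ∨
        U * Mm x z * Uᵀ = c • Mm (δv ⟨0, hm⟩) (δv ⟨0, hm⟩)) := by
  have hxa : ∃ a, x a ≠ 0 := by
    by_contra hcn; push_neg at hcn; exact hx (funext fun a => hcn a)
  obtain ⟨a, ha0⟩ := hxa
  have ha1 : x a = 1 := f2_ne_zero ha0
  -- step 1 : send x to δv a
  have hcond1 : dot2 (δv a) (x + δv a) = 0 := by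
    rw [dot2_delta_left, Pi.add_apply, ha1, δv_self, f2_one_add_one]
  have hres1 : Tv (x + δv a) (δv a) x = δv a := by
    rw [Tv, dot2_delta_left, ha1, one_smul, ← add_assoc, vadd_self, zero_add]
  have h1 : TU (x + δv a) (δv a) * Mm x z * (TU (x + δv a) (δv a))ᵀ
      = (1 : ℝ) • Mm (δv a) (Tv (δv a) (x + δv a) z) := by
    rw [TU_conj hcond1, hres1, one_smul]
  -- step 2 : swap a and 0
  have hcond2 : dot2 (δv (⟨0, hm⟩ : Fin m) + δv a) (δv (⟨0, hm⟩ : Fin m) + δv a) = 0 := by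
    rw [dot2_add_left, dot2_delta_left, dot2_delta_left, Pi.add_apply, Pi.add_apply]
    by_cases hai : a = (⟨0, hm⟩ : Fin m)
    · subst hai; simp only [δv_self]; decide
    · simp only [δv_self, δv_ne hai, δv_ne (Ne.symm hai)]; decide
  have hres2 : Tv (δv (⟨0, hm⟩ : Fin m) + δv a) (δv (⟨0, hm⟩ : Fin m) + δv a) (δv a)
      = δv (⟨0, hm⟩ : Fin m) := by
    by_cases hai : a = (⟨0, hm⟩ : Fin m)
    · subst hai
      rw [Tv, vadd_self, smul_zero, add_zero]
    · rw [Tv, dot2_add_left, dot2_delta_left, dot2_delta_left, δv_self,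
        δv_ne (Ne.symm hai), zero_add, one_smul,
        add_comm (δv (⟨0, hm⟩ : Fin m)) (δv a), ← add_assoc, vadd_self, zero_add]
  set w := Tv (δv (⟨0, hm⟩ : Fin m) + δv a) (δv (⟨0, hm⟩ : Fin m) + δv a)
      (Tv (δv a) (x + δv a) z) with hwdef
  have h2 : TU (δv (⟨0, hm⟩ : Fin m) + δv a) (δv (⟨0, hm⟩ : Fin m) + δv a) *
        Mm (δv a) (Tv (δv a) (x + δv a) z) *
        (TU (δv (⟨0, hm⟩ : Fin m) + δv a) (δv (⟨0, hm⟩ : Fin m) + δv a))ᵀ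
      = (1 : ℝ) • Mm (δv ⟨0, hm⟩) w := by
    rw [TU_conj hcond2, hres2, one_smul]
  obtain ⟨hCl2, h12⟩ := step (Cl_TU hcond1) (Cl_TU hcond2) h1 h2
  by_cases hwi : w ⟨0, hm⟩ = 1
  · -- step 3 : get Mm δ0 δ0
    have hcond3 : dot2 (w + δv ⟨0, hm⟩) (δv (⟨0, hm⟩ : Fin m)) = 0 := by
      rw [dot2_delta_right, Pi.add_apply, hwi, δv_self, f2_one_add_one]
    have hresx3 : Tv (δv (⟨0, hm⟩ : Fin m)) (w + δv ⟨0, hm⟩) (δv ⟨0, hm⟩) = δv ⟨0, hm⟩ := by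
      rw [Tv]
      have : dot2 (w + δv ⟨0, hm⟩) (δv (⟨0, hm⟩ : Fin m)) = 0 := hcond3
      rw [this, zero_smul, add_zero]
    have hresz3 : Tv (w + δv ⟨0, hm⟩) (δv (⟨0, hm⟩ : Fin m)) w = δv ⟨0, hm⟩ := by
      rw [Tv, dot2_delta_left, hwi, one_smul, ← add_assoc, vadd_self, zero_add]
    have h3 : TU (δv ⟨0, hm⟩) (w + δv ⟨0, hm⟩) * Mm (δv ⟨0, hm⟩) w *
          (TU (δv ⟨0, hm⟩) (w + δv ⟨0, hm⟩))ᵀ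
        = (1 : ℝ) • Mm (δv ⟨0, hm⟩) (δv ⟨0, hm⟩) := by
      rw [TU_conj hcond3, hresx3, hresz3, one_smul]
    obtain ⟨hCl3, h123⟩ := step hCl2 (Cl_TU hcond3) h12 h3
    exact ⟨_, _, hCl3, Or.inl (by norm_num), Or.inr h123⟩
  · -- step 3' : Hadamard at 0 then clear z
    have hw0 : w ⟨0, hm⟩ = 0 := f2_ne_one hwi
    have hs : s2 (δv (⟨0, hm⟩ : Fin m) ⟨0, hm⟩) (w ⟨0, hm⟩) = 1 := by
      rw [δv_self, hw0, s2]
      norm_num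
    have hupx : Function.update (δv (⟨0, hm⟩ : Fin m)) ⟨0, hm⟩ (w ⟨0, hm⟩)
        = (0 : Fin m → Fin 2) := by
      funext b
      by_cases hb : b = (⟨0, hm⟩ : Fin m)
      · subst hb; rw [Function.update_self, hw0]; rfl
      · rw [Function.update_of_ne hb, δv_ne hb]; rfl
    have hupz : Function.update w (⟨0, hm⟩ : Fin m) (δv (⟨0, hm⟩ : Fin m) ⟨0, hm⟩)
        = w + δv ⟨0, hm⟩ := by
      funext b
      by_cases hb : b = (⟨0, hm⟩ : Fin m)
      · subst hb
        rw [Function.update_self, δv_self, Pi.add_apply, hw0, δv_self, zero_add]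
      · rw [Function.update_of_ne hb, Pi.add_apply, δv_ne hb, add_zero]
    have h3 : Had (⟨0, hm⟩ : Fin m) * Mm (δv ⟨0, hm⟩) w * (Had (⟨0, hm⟩ : Fin m))ᵀ
        = (1 : ℝ) • Mm 0 (w + δv ⟨0, hm⟩) := by
      rw [Had_conj, hs, hupx, hupz]
    obtain ⟨hCl3, h123⟩ := step hCl2 (Cl_Had _) h12 h3
    have hw2 : (w + δv ⟨0, hm⟩) ⟨0, hm⟩ = 1 := by
      rw [Pi.add_apply, hw0, δv_self, zero_add]
    have hcond4 : dot2 ((w + δv ⟨0, hm⟩) + δv ⟨0, hm⟩) (δv (⟨0, hm⟩ : Fin m)) = 0 := by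
      rw [dot2_delta_right, Pi.add_apply, hw2, δv_self, f2_one_add_one]
    have hresx4 : Tv (δv (⟨0, hm⟩ : Fin m)) ((w + δv ⟨0, hm⟩) + δv ⟨0, hm⟩) 0 = 0 := by
      rw [Tv, dot2_zero_right, zero_smul, add_zero]
    have hresz4 : Tv ((w + δv ⟨0, hm⟩) + δv ⟨0, hm⟩) (δv (⟨0, hm⟩ : Fin m)) (w + δv ⟨0, hm⟩)
        = δv ⟨0, hm⟩ := by
      rw [Tv, dot2_delta_left, hw2, one_smul, ← add_assoc, vadd_self, zero_add]
    have h4 : TU (δv ⟨0, hm⟩) ((w + δv ⟨0, hm⟩) + δv ⟨0, hm⟩) * Mm 0 (w + δv ⟨0, hm⟩) *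
          (TU (δv ⟨0, hm⟩) ((w + δv ⟨0, hm⟩) + δv ⟨0, hm⟩))ᵀ
        = (1 : ℝ) • Mm 0 (δv ⟨0, hm⟩) := by
      rw [TU_conj hcond4, hresx4, hresz4, one_smul]
    obtain ⟨hCl4, h1234⟩ := step hCl3 (Cl_TU hcond4) h123 h4
    exact ⟨_, _, hCl4, Or.inl (by norm_num), Or.inl h1234⟩

lemma reduce (hm : 0 < m) (x z : Fin m → Fin 2) (h : ¬(x = 0 ∧ z = 0)) :
    ∃ (U : EMat m) (c : ℝ), Cl U ∧ (c = 1 ∨ c = -1) ∧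
      (U * Mm x z * Uᵀ = c • Mm 0 (δv ⟨0, hm⟩) ∨
        U * Mm x z * Uᵀ = c • Mm (δv ⟨0, hm⟩) (δv ⟨0, hm⟩)) := by
  by_cases hx : x = 0
  · subst hx
    have hz : z ≠ 0 := fun hz => h ⟨rfl, hz⟩
    have hza : ∃ a, z a ≠ 0 := by
      by_contra hcn; push_neg at hcn; exact hz (funext fun a => hcn a)
    obtain ⟨a, ha0⟩ := hza
    have ha1 : z a = 1 := f2_ne_zero ha0
    have hs : s2 ((0 : Fin m → Fin 2) a) (z a) = 1 := by
      rw [Pi.zero_apply, ha1, s2]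
      norm_num
    have h1 : Had a * Mm 0 z * (Had a)ᵀ
        = (1 : ℝ) • Mm (Function.update (0 : Fin m → Fin 2) a (z a))
            (Function.update z a ((0 : Fin m → Fin 2) a)) := by
      rw [Had_conj, hs]
    have hx1 : Function.update (0 : Fin m → Fin 2) a (z a) ≠ 0 := by
      intro hp
      have := congrFun hp a
      rw [Function.update_self, ha1] at this
      exact one_ne_zero this
    obtain ⟨W, c, hClW, hc, hdisj⟩ := reduce_x hm
      (Function.update (0 : Fin m → Fin 2) a (z a))
      (Function.update z a ((0 : Fin m → Fin 2) a)) hx1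
    rcases hdisj with hd | hd
    · obtain ⟨hCl', h'⟩ := step (Cl_Had a) hClW h1 hd
      exact ⟨_, _, hCl', by rcases hc with rfl | rfl <;> norm_num, Or.inl h'⟩
    · obtain ⟨hCl', h'⟩ := step (Cl_Had a) hClW h1 hd
      exact ⟨_, _, hCl', by rcases hc with rfl | rfl <;> norm_num, Or.inr h'⟩
  · exact reduce_x hm x z hx


/-! ### the target representatives -/

lemma target2 (hm : 0 < m) :
    kprod m (fun b => pauliR (if (b : ℕ) = 0 then 2 else 0)) = Mm 0 (δv ⟨0, hm⟩) := by
  refine congrArg (kprod m) (funext fun b => ?_)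
  by_cases hb : (b : ℕ) = 0
  · have hbe : b = (⟨0, hm⟩ : Fin m) := Fin.ext hb
    rw [if_pos hb, pauliR_eq 2, hbe]
    simp [xb, zb, δv]
  · have hbne : b ≠ (⟨0, hm⟩ : Fin m) := fun he => hb (by rw [he])
    rw [if_neg hb, pauliR_eq 0]
    simp [xb, zb, δv_ne hbne]

lemma target3 (hm : 0 < m) :
    kprod m (fun b => pauliR (if (b : ℕ) = 0 then 3 else 0)) = Mm (δv ⟨0, hm⟩) (δv ⟨0, hm⟩) := by
  refine congrArg (kprod m) (funext fun b => ?_)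
  by_cases hb : (b : ℕ) = 0
  · have hbe : b = (⟨0, hm⟩ : Fin m) := Fin.ext hb
    rw [if_pos hb, pauliR_eq 3, hbe]
    simp [xb, zb, δv]
  · have hbne : b ≠ (⟨0, hm⟩ : Fin m) := fun he => hb (by rw [he])
    rw [if_neg hb, pauliR_eq 0]
    simp [xb, zb, δv_ne hbne]

lemma Kflip (hm : 0 < m) (xt : Fin m → Fin 2) :
    Mm (δv ⟨0, hm⟩) 0 * Mm xt (δv ⟨0, hm⟩) * (Mm (δv ⟨0, hm⟩) (0 : Fin m → Fin 2))ᵀ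
      = (-1 : ℝ) • Mm xt (δv ⟨0, hm⟩) := by
  rw [Mm_conj, chi_zero_left, one_mul, chi_delta]

end EspAux

open EspAux

/-- Every element of `E(m)` (`m ≥ 2`) is conjugate, by an orthogonal matrix lying in the
normalizer of `E(m)` in `O(2^m, ℝ)`, to one of `I`, `-I`, `σ₂ ⊗ 1₂ ⊗ ⋯ ⊗ 1₂`,
`σ₃ ⊗ 1₂ ⊗ ⋯ ⊗ 1₂`. -/
theorem esp_conjugacy_representatives (m : ℕ) (hm : 2 ≤ m) :
    ∀ g ∈ Esp m, ∃ U : EMat m,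
      U * Uᵀ = 1 ∧ Uᵀ * U = 1 ∧
      (∀ h : EMat m, h ∈ Esp m ↔ U * h * Uᵀ ∈ Esp m) ∧
      (Uᵀ * g * U = 1 ∨ Uᵀ * g * U = -1 ∨
        Uᵀ * g * U = kprod m (fun b => pauliR (if (b : ℕ) = 0 then 2 else 0)) ∨
        Uᵀ * g * U = kprod m (fun b => pauliR (if (b : ℕ) = 0 then 3 else 0))) := by
  intro g hg
  have hm0 : 0 < m := by omega
  obtain ⟨c, x, z, hc, rfl⟩ := (mem_Esp_iff g).1 hg
  by_cases h0 : x = 0 ∧ z = 0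
  · obtain ⟨rfl, rfl⟩ := h0
    refine ⟨1, by simp, by simp, fun h => by simp, ?_⟩
    rw [Matrix.transpose_one, Matrix.one_mul, Matrix.mul_one, Mm_zero]
    rcases hc with rfl | rfl
    · exact Or.inl (one_smul _ _)
    · exact Or.inr (Or.inl (by rw [neg_smul, one_smul]))
  · obtain ⟨W, c', hClW, hc', hdisj⟩ := reduce hm0 x z h0
    have he : c * c' = 1 ∨ c * c' = -1 := by
      rcases hc with rfl | rfl <;> rcases hc' with rfl | rfl <;> norm_num
    rcases hdisj with hd | hd
    · -- target Mm 0 δ0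
      have hWc : W * (c • Mm x z) * Wᵀ = (c * c') • Mm 0 (δv ⟨0, hm0⟩) := by
        rw [Matrix.mul_smul, Matrix.smul_mul, hd, smul_smul]
      rcases he with he1 | he1
      · refine ⟨Wᵀ, hClW.2.1, by rw [Matrix.transpose_transpose]; exact hClW.1,
          fun h => Cl_iff_mem (Cl_transpose hClW) h, ?_⟩
        refine Or.inr (Or.inr (Or.inl ?_))
        rw [Matrix.transpose_transpose, hWc, he1, one_smul, target2 hm0]
      · obtain ⟨hClKW, hfin⟩ := step hClW (Cl_Mm (δv ⟨0, hm0⟩) 0) hWc (Kflip hm0 0)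
        refine ⟨(Mm (δv ⟨0, hm0⟩) 0 * W)ᵀ, hClKW.2.1,
          by rw [Matrix.transpose_transpose]; exact hClKW.1,
          fun h => Cl_iff_mem (Cl_transpose hClKW) h, ?_⟩
        refine Or.inr (Or.inr (Or.inl ?_))
        rw [Matrix.transpose_transpose, hfin, he1, target2 hm0]
        norm_num
    · -- target Mm δ0 δ0
      have hWc : W * (c • Mm x z) * Wᵀ = (c * c') • Mm (δv ⟨0, hm0⟩) (δv ⟨0, hm0⟩) := by
        rw [Matrix.mul_smul, Matrix.smul_mul, hd, smul_smul]
      rcases he with he1 | he1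
      · refine ⟨Wᵀ, hClW.2.1, by rw [Matrix.transpose_transpose]; exact hClW.1,
          fun h => Cl_iff_mem (Cl_transpose hClW) h, ?_⟩
        refine Or.inr (Or.inr (Or.inr ?_))
        rw [Matrix.transpose_transpose, hWc, he1, one_smul, target3 hm0]
      · obtain ⟨hClKW, hfin⟩ := step hClW (Cl_Mm (δv ⟨0, hm0⟩) 0) hWc (Kflip hm0 (δv ⟨0, hm0⟩))
        refine ⟨(Mm (δv ⟨0, hm0⟩) 0 * W)ᵀ, hClKW.2.1,
          by rw [Matrix.transpose_transpose]; exact hClKW.1,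
          fun h => Cl_iff_mem (Cl_transpose hClKW) h, ?_⟩
        refine Or.inr (Or.inr (Or.inr ?_))
        rw [Matrix.transpose_transpose, hfin, he1, target3 hm0]
        norm_num
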